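/- Let Ω be a nonempty compact topological space and let F_r be a finite-dimensional linear subspace of the space C(Ω, ℝ) of real-valued continuous functions on Ω equipped with the supremum norm. Then there exists a finite set X ⊆ Ω such that for every g ∈ F_r one has sup_{x ∈ Ω} |g(x)| ≤ 2 · max_{x ∈ X} |g(x)|. -/

import Mathlib

/-- Theorem 4 (TheSupStab): norming-set result in `C(Ω)` under the sup norm.
Every finite-dimensional subspace admits a finite set of sampling points with
stability constant at most 2. -/
theorem sup_norm_norming_set
    {Ω : Type*} [TopologicalSpace Ω] [CompactSpace Ω] [Nonempty Ω]
    (Fr : Submodule ℝ C(Ω, ℝ)) [FiniteDimensional ℝ Fr] :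
    ∃ (X : Finset Ω) (hX : X.Nonempty),
      ∀ g ∈ Fr, ‖g‖ ≤ 2 * X.sup' hX (fun x => |g x|) := by
  classical
  -- The unit sphere of Fr is compact.
  have hS : IsCompact (Metric.sphere (0 : Fr) 1) := isCompact_sphere 0 1
  -- Open cover by evaluation sets.
  set U : Ω → Set Fr := fun x => {u : Fr | 1/2 < |(u : C(Ω, ℝ)) x|} with hU
  have hUopen : ∀ x, IsOpen (U x) := by
    intro x
    have hc : Continuous fun u : Fr => |(u : C(Ω, ℝ)) x| :=
      ((continuous_eval_const x).comp continuous_subtype_val).abs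
    exact isOpen_lt continuous_const hc
  have hcover : Metric.sphere (0 : Fr) 1 ⊆ ⋃ x, U x := by
    intro u hu
    have hnorm : ‖u‖ = 1 := by simpa using hu
    -- |u| attains its max on Ω at some x0 with value ‖u‖
    have hcont : Continuous fun x : Ω => |(u : C(Ω, ℝ)) x| :=
      ((u : C(Ω, ℝ)).continuous).abs
    obtain ⟨x0, _, hx0⟩ := isCompact_univ.exists_isMaxOn Set.univ_nonempty
      (hcont.continuousOn)
    have hle : ∀ x, |(u : C(Ω, ℝ)) x| ≤ |(u : C(Ω, ℝ)) x0| := fun x =>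
      hx0 (Set.mem_univ x)
    have hnle : ‖(u : C(Ω, ℝ))‖ ≤ |(u : C(Ω, ℝ)) x0| := by
      apply ContinuousMap.norm_le _ (abs_nonneg _) |>.mpr
      intro x
      simpa [Real.norm_eq_abs] using hle x
    have h1 : (1 : ℝ) ≤ |(u : C(Ω, ℝ)) x0| := by
      have : ‖(u : C(Ω, ℝ))‖ = 1 := hnorm
      linarith [hnle, this.ge]
    exact Set.mem_iUnion.mpr ⟨x0, by simp only [U, Set.mem_setOf_eq]; linarith⟩
  obtain ⟨t, ht⟩ := hS.elim_finite_subcover U hUopen hcover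
  obtain ⟨x₀⟩ := ‹Nonempty Ω›
  refine ⟨insert x₀ t, Finset.insert_nonempty _ _, ?_⟩
  intro g hg
  have hRHSnn : 0 ≤ (insert x₀ t).sup' (Finset.insert_nonempty _ _) (fun x => |g x|) := by
    refine le_trans (abs_nonneg (g x₀)) ?_
    exact Finset.le_sup' (fun x => |g x|) (Finset.mem_insert_self _ _)
  by_cases hg0 : g = 0
  · subst hg0
    rw [show ‖(0 : C(Ω, ℝ))‖ = 0 from norm_zero]
    linarith
  · have hgn : (0 : ℝ) < ‖g‖ := norm_pos_iff.mpr hg0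
    set v : Fr := ‖g‖⁻¹ • (⟨g, hg⟩ : Fr) with hv
    have hvc : (v : C(Ω, ℝ)) = ‖g‖⁻¹ • g := rfl
    have hvn : ‖v‖ = 1 := by
      have : ‖v‖ = ‖(v : C(Ω, ℝ))‖ := rfl
      rw [this, hvc, norm_smul (‖g‖⁻¹) g]
      simp [abs_of_pos (inv_pos.mpr hgn), inv_mul_cancel₀ hgn.ne']
    have hvS : v ∈ Metric.sphere (0 : Fr) 1 := by rw [mem_sphere_zero_iff_norm]; exact hvn
    obtain ⟨x, hxt, hxv⟩ := Set.mem_iUnion₂.mp (ht hvS)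
    have hxval : (v : C(Ω, ℝ)) x = ‖g‖⁻¹ * g x := by
      simp [hv]
    have hxv' : 1/2 < ‖g‖⁻¹ * |g x| := by
      have := hxv
      simp only [U, Set.mem_setOf_eq, hxval, abs_mul, abs_of_pos (inv_pos.mpr hgn)] at this ⊢
      exact this
    have hkey : ‖g‖ < 2 * |g x| := by
      have h2 : ‖g‖ * (1/2) < ‖g‖ * (‖g‖⁻¹ * |g x|) := by
        exact mul_lt_mul_of_pos_left hxv' hgn
      rw [← mul_assoc, mul_inv_cancel₀ hgn.ne', one_mul] at h2
      linarith
    have hle : |g x| ≤ (insert x₀ t).sup' (Finset.insert_nonempty _ _) (fun x => |g x|) :=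
      Finset.le_sup' (fun x => |g x|) (Finset.mem_insert_of_mem hxt)
    linarith
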